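/- ∫₀^∞ t³ e^{-t²/2} Φ(ρt/√(1-ρ²)) dt = (2 + 3ρ - ρ³)/2, where Φ is the standard normal CDF and -1 < ρ < 1. -/

import Mathlib

open MeasureTheory Real Filter Set

noncomputable def Phi (x : ℝ) : ℝ :=
  ∫ s in Set.Iic x, (1 / Real.sqrt (2 * Real.pi)) * Real.exp (-s ^ 2 / 2)

noncomputable def stdPdf (x : ℝ) : ℝ := (1 / Real.sqrt (2 * Real.pi)) * Real.exp (-x ^ 2 / 2)

noncomputable def phi2 (ρ x y : ℝ) : ℝ :=
  (1 / (2 * Real.pi * Real.sqrt (1 - ρ ^ 2))) *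
    Real.exp (-(x ^ 2 - 2 * ρ * x * y + y ^ 2) / (2 * (1 - ρ ^ 2)))

noncomputable def sg (x : ℝ) : ℝ := if 0 ≤ x then 1 else -1

/- ## Auxiliary lemmas about stdPdf -/

lemma stdPdf_cont : Continuous stdPdf := by
  unfold stdPdf; fun_prop

lemma stdPdf_nonneg (x : ℝ) : 0 ≤ stdPdf x := by
  unfold stdPdf; positivity

lemma stdPdf_le (x : ℝ) : stdPdf x ≤ 1 / Real.sqrt (2 * Real.pi) := by
  unfold stdPdf
  have h1 : Real.exp (-x ^ 2 / 2) ≤ 1 := by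
    rw [Real.exp_le_one_iff]; nlinarith [sq_nonneg x]
  have h2 : (0:ℝ) < 1 / Real.sqrt (2 * Real.pi) := by positivity
  nlinarith

lemma stdPdf_integrable : Integrable stdPdf := by
  unfold stdPdf
  apply Integrable.const_mul
  have : (fun x : ℝ => Real.exp (-x ^ 2 / 2)) = fun x : ℝ => Real.exp (-(1/2 : ℝ) * x ^ 2) := by
    funext x; congr 1; ring
  rw [this]
  exact integrable_exp_neg_mul_sq (by norm_num)

lemma integral_stdPdf : ∫ x : ℝ, stdPdf x = 1 := by
  unfold stdPdf
  rw [integral_const_mul]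
  have : (fun x : ℝ => Real.exp (-x ^ 2 / 2)) = fun x : ℝ => Real.exp (-(1/2 : ℝ) * x ^ 2) := by
    funext x; congr 1; ring
  rw [this, integral_gaussian]
  have h2 : Real.sqrt (π / (1/2)) = Real.sqrt (2 * π) := by norm_num [mul_comm]
  rw [h2]
  rw [one_div, inv_mul_cancel₀]
  positivity

/- ## Auxiliary lemmas about Phi -/

lemma Phi_eq (x : ℝ) : Phi x = ∫ s in Set.Iic x, stdPdf s := rfl

lemma Phi_nonneg (x : ℝ) : 0 ≤ Phi x := by
  rw [Phi_eq]
  exact setIntegral_nonneg measurableSet_Iic fun s _ => stdPdf_nonneg s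

lemma Phi_le_one (x : ℝ) : Phi x ≤ 1 := by
  rw [Phi_eq, ← integral_stdPdf]
  exact setIntegral_le_integral stdPdf_integrable (Filter.Eventually.of_forall stdPdf_nonneg)

lemma abs_Phi_le_one (x : ℝ) : |Phi x| ≤ 1 :=
  abs_le.2 ⟨by linarith [Phi_nonneg x], Phi_le_one x⟩

lemma Phi_zero : Phi 0 = 1 / 2 := by
  have heven : ∀ x : ℝ, stdPdf (-x) = stdPdf x := by
    intro x; unfold stdPdf; rw [neg_pow]; ring_nf
  have h1 : (∫ s in Set.Iic (0:ℝ), stdPdf s) = ∫ s in Set.Ioi (0:ℝ), stdPdf s := by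
    have h := integral_comp_neg_Iic (0:ℝ) stdPdf
    simp only [heven, neg_zero] at h
    exact h
  have h2 : (∫ s in Set.Iic (0:ℝ), stdPdf s) + (∫ s in Set.Ioi (0:ℝ), stdPdf s) = 1 := by
    rw [intervalIntegral.integral_Iic_add_Ioi stdPdf_integrable.integrableOn
      stdPdf_integrable.integrableOn]
    exact integral_stdPdf
  rw [Phi_eq]
  linarith [h1, h2]

lemma hasDerivAt_Phi (x : ℝ) : HasDerivAt Phi (stdPdf x) x := by
  have key : Phi = fun u => Phi 0 + ∫ t in (0:ℝ)..u, stdPdf t := by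
    funext u
    rw [Phi_eq, Phi_eq, ← intervalIntegral.integral_Iic_sub_Iic
      stdPdf_integrable.integrableOn stdPdf_integrable.integrableOn]
    ring
  rw [key]
  have h := intervalIntegral.integral_hasDerivAt_right
    (stdPdf_integrable.intervalIntegrable (a := 0) (b := x))
    (stdPdf_cont.stronglyMeasurableAtFilter volume (nhds x)) stdPdf_cont.continuousAt
  simpa using h

lemma Phi_continuous : Continuous Phi :=
  continuous_iff_continuousAt.2 fun x => (hasDerivAt_Phi x).continuousAt

/- ## Gaussian moment lemmas -/

lemma tendsto_rpow_gauss {b : ℝ} (hb : 0 < b) (s : ℝ) :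
    Tendsto (fun x : ℝ => x ^ s * Real.exp (-b * x ^ 2)) atTop (nhds 0) := by
  apply (rpow_mul_exp_neg_mul_sq_isLittleO_exp_neg hb s).trans_tendsto
  have h1 : Tendsto (fun x : ℝ => (1/2 : ℝ) * x) atTop atTop :=
    Tendsto.const_mul_atTop (by norm_num) tendsto_id
  exact (Real.tendsto_exp_neg_atTop_nhds_zero.comp h1).congr
    (fun x => by simp [Function.comp, neg_mul])

lemma tendsto_pow_gauss {b : ℝ} (hb : 0 < b) (n : ℕ) :
    Tendsto (fun x : ℝ => x ^ n * Real.exp (-b * x ^ 2)) atTop (nhds 0) := by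
  apply (tendsto_rpow_gauss hb n).congr'
  filter_upwards [eventually_ge_atTop (0:ℝ)] with x hx
  rw [Real.rpow_natCast]

lemma integrableOn_pow_gauss {b : ℝ} (hb : 0 < b) (n : ℕ) :
    IntegrableOn (fun x : ℝ => x ^ n * Real.exp (-b * x ^ 2)) (Set.Ioi 0) := by
  have h := integrableOn_rpow_mul_exp_neg_mul_sq hb
    (s := n) (by exact lt_of_lt_of_le (by norm_num) (Nat.cast_nonneg n))
  apply h.congr_fun ?_ measurableSet_Ioi
  intro x hx
  simp [Real.rpow_natCast]

lemma integral_sq_gauss {b : ℝ} (hb : 0 < b) :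
    ∫ x in Set.Ioi (0:ℝ), x ^ 2 * Real.exp (-b * x ^ 2)
      = Real.sqrt (π / b) / (4 * b) := by
  set G : ℝ → ℝ := fun t => -(t * Real.exp (-b * t ^ 2)) / (2 * b) with hG
  have hderiv : ∀ t : ℝ, HasDerivAt G
      (t ^ 2 * Real.exp (-b * t ^ 2) - Real.exp (-b * t ^ 2) / (2 * b)) t := by
    intro t
    have h1 : HasDerivAt (fun t : ℝ => -b * t ^ 2) (-b * (2 * t)) t := by
      simpa using ((hasDerivAt_pow 2 t).const_mul (-b))
    have h2 : HasDerivAt (fun t : ℝ => Real.exp (-b * t ^ 2))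
        (Real.exp (-b * t ^ 2) * (-b * (2 * t))) t := h1.exp
    have h3 : HasDerivAt (fun t : ℝ => t * Real.exp (-b * t ^ 2))
        (1 * Real.exp (-b * t ^ 2) + t * (Real.exp (-b * t ^ 2) * (-b * (2 * t)))) t :=
      (hasDerivAt_id t).mul h2
    have h4 := (h3.neg).div_const (2 * b)
    refine h4.congr_deriv ?_
    field_simp
    ring
  have hint : IntegrableOn
      (fun t : ℝ => t ^ 2 * Real.exp (-b * t ^ 2) - Real.exp (-b * t ^ 2) / (2 * b))
      (Set.Ioi 0) := by
    apply (integrableOn_pow_gauss hb 2).sub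
    exact ((integrable_exp_neg_mul_sq hb).div_const (2*b)).integrableOn
  have htend : Tendsto G atTop (nhds 0) := by
    have := ((tendsto_pow_gauss hb 1).neg).div_const (2 * b)
    simpa [hG] using this
  have key := integral_Ioi_of_hasDerivAt_of_tendsto
    (hderiv 0).continuousAt.continuousWithinAt (fun x _ => hderiv x) hint htend
  have hsplit : (∫ t in Set.Ioi (0:ℝ),
      (t ^ 2 * Real.exp (-b * t ^ 2) - Real.exp (-b * t ^ 2) / (2 * b)))
      = (∫ t in Set.Ioi (0:ℝ), t ^ 2 * Real.exp (-b * t ^ 2))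
        - (∫ t in Set.Ioi (0:ℝ), Real.exp (-b * t ^ 2)) / (2 * b) := by
    rw [integral_sub (integrableOn_pow_gauss hb 2)
      (((integrable_exp_neg_mul_sq hb).div_const (2*b)).integrableOn), integral_div]
  rw [hsplit] at key
  have hG0 : G 0 = 0 := by simp [hG]
  rw [hG0, sub_zero, integral_gaussian_Ioi b] at key
  have hb' : (2:ℝ) * b ≠ 0 := by positivity
  field_simp at key ⊢
  ring_nf at key ⊢
  linarith

lemma integrableOn_pow_halfgauss (n : ℕ) :
    IntegrableOn (fun x : ℝ => x ^ n * Real.exp (-x ^ 2 / 2)) (Set.Ioi 0) := by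
  have h := integrableOn_pow_gauss (b := 1/2) (by norm_num) n
  apply h.congr_fun ?_ measurableSet_Ioi
  intro x hx
  show x ^ n * Real.exp (-(1/2 : ℝ) * x ^ 2) = x ^ n * Real.exp (-x ^ 2 / 2)
  congr 2
  ring

theorem stmt1 (ρ : ℝ) (h1 : -1 < ρ) (h2 : ρ < 1) :
    ∫ t in Set.Ioi (0 : ℝ), t ^ 3 * Real.exp (-t ^ 2 / 2) * Phi (ρ * t / Real.sqrt (1 - ρ ^ 2))
      = (2 + 3 * ρ - ρ ^ 3) / 2 := by
  set r : ℝ := Real.sqrt (1 - ρ ^ 2) with hrdef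
  have h1ρ : (0:ℝ) < 1 - ρ ^ 2 := by nlinarith
  have hr : 0 < r := Real.sqrt_pos.2 h1ρ
  have hr2 : r ^ 2 = 1 - ρ ^ 2 := Real.sq_sqrt h1ρ.le
  set c : ℝ := ρ / r with hcdef
  set b : ℝ := 1 / (2 * (1 - ρ ^ 2)) with hbdef
  have hb : 0 < b := by positivity
  -- rewrite the integrand argument
  have harg : ∀ t : ℝ, ρ * t / r = c * t := fun t => (div_mul_eq_mul_div ρ r t).symm
  simp_rw [harg]
  -- combining exponentials
  have hexp : ∀ t : ℝ, Real.exp (-t ^ 2 / 2) * Real.exp (-(c * t) ^ 2 / 2)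
      = Real.exp (-b * t ^ 2) := by
    intro t
    rw [← Real.exp_add]
    congr 1
    have hc2 : c ^ 2 = ρ ^ 2 / (1 - ρ ^ 2) := by rw [hcdef, div_pow, hr2]
    rw [mul_pow, hc2, hbdef]
    field_simp
    ring
  -- the antiderivative
  set F : ℝ → ℝ := fun t => -((t ^ 2 + 2) * Real.exp (-t ^ 2 / 2) * Phi (c * t)) with hF
  set f' : ℝ → ℝ := fun t => t ^ 3 * Real.exp (-t ^ 2 / 2) * Phi (c * t)
    - (c / Real.sqrt (2 * π)) * (t ^ 2 * Real.exp (-b * t ^ 2) + 2 * Real.exp (-b * t ^ 2))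
    with hf'
  have hderiv : ∀ t : ℝ, HasDerivAt F (f' t) t := by
    intro t
    have hA : HasDerivAt (fun t : ℝ => (t ^ 2 + 2) * Real.exp (-t ^ 2 / 2))
        ((2 * t) * Real.exp (-t ^ 2 / 2)
          + (t ^ 2 + 2) * (Real.exp (-t ^ 2 / 2) * (-t))) t := by
      have hin : HasDerivAt (fun t : ℝ => -t ^ 2 / 2) (-t) t := by
        have h0 := (hasDerivAt_pow 2 t).const_mul (-(1:ℝ)/2)
        have heq : (fun x : ℝ => -(1:ℝ)/2 * x ^ 2) = fun x : ℝ => -x ^ 2 / 2 := by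
          funext x; ring
        rw [heq] at h0
        refine h0.congr_deriv ?_
        push_cast
        ring
      have he : HasDerivAt (fun t : ℝ => Real.exp (-t ^ 2 / 2))
          (Real.exp (-t ^ 2 / 2) * (-t)) t := hin.exp
      have hp : HasDerivAt (fun t : ℝ => t ^ 2 + 2) (2 * t) t := by
        simpa using (hasDerivAt_pow 2 t).add_const 2
      exact hp.mul he
    have hP : HasDerivAt (fun t : ℝ => Phi (c * t)) (stdPdf (c * t) * c) t := by
      have hlin : HasDerivAt (fun t : ℝ => c * t) c t := by
        simpa using (hasDerivAt_id t).const_mul c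
      exact (hasDerivAt_Phi (c * t)).comp t hlin
    have := ((hA.mul hP).neg)
    refine this.congr_deriv ?_
    have hpdf : c * ((t ^ 2 + 2) * Real.exp (-t ^ 2 / 2) * stdPdf (c * t))
        = (c / Real.sqrt (2 * π)) * (t ^ 2 * Real.exp (-b * t ^ 2)
            + 2 * Real.exp (-b * t ^ 2)) := by
      unfold stdPdf
      rw [show (t ^ 2 + 2) * Real.exp (-t ^ 2 / 2)
          * (1 / Real.sqrt (2 * π) * Real.exp (-(c * t) ^ 2 / 2))
        = (1 / Real.sqrt (2 * π)) * ((t ^ 2 + 2)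
          * (Real.exp (-t ^ 2 / 2) * Real.exp (-(c * t) ^ 2 / 2))) by ring, hexp t]
      ring
    rw [hf']
    simp only
    rw [← hpdf]
    ring
  -- limit of F at infinity
  have htendF : Tendsto F atTop (nhds 0) := by
    apply squeeze_zero_norm (a := fun t : ℝ =>
      t ^ 2 * Real.exp (-(1/2:ℝ) * t ^ 2) + 2 * (t ^ 0 * Real.exp (-(1/2:ℝ) * t ^ 2)))
    · intro t
      have hA : (0:ℝ) ≤ (t ^ 2 + 2) * Real.exp (-t ^ 2 / 2) := by positivity
      have : ‖F t‖ = (t ^ 2 + 2) * Real.exp (-t ^ 2 / 2) * |Phi (c * t)| := by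
        rw [hF]
        simp only [norm_neg, norm_mul, Real.norm_eq_abs]
        rw [abs_of_nonneg (by positivity : (0:ℝ) ≤ t ^ 2 + 2),
          abs_of_nonneg (Real.exp_nonneg _)]
      rw [this]
      calc (t ^ 2 + 2) * Real.exp (-t ^ 2 / 2) * |Phi (c * t)|
          ≤ (t ^ 2 + 2) * Real.exp (-t ^ 2 / 2) * 1 := by
            apply mul_le_mul_of_nonneg_left (abs_Phi_le_one _) hA
        _ = t ^ 2 * Real.exp (-(1/2:ℝ) * t ^ 2)
            + 2 * (t ^ 0 * Real.exp (-(1/2:ℝ) * t ^ 2)) := by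
            rw [show -(1/2:ℝ) * t ^ 2 = -t ^ 2 / 2 by ring]; ring
    · have ha := tendsto_pow_gauss (b := 1/2) (by norm_num) 2
      have hb0 := (tendsto_pow_gauss (b := 1/2) (by norm_num) 0).const_mul 2
      simpa using ha.add hb0
  -- integrability of f'
  have hPhicont : Continuous fun t : ℝ => Phi (c * t) :=
    Phi_continuous.comp (continuous_const.mul continuous_id)
  have hintg : IntegrableOn (fun t : ℝ => t ^ 3 * Real.exp (-t ^ 2 / 2) * Phi (c * t))
      (Set.Ioi 0) := by
    apply Integrable.mono' (integrableOn_pow_halfgauss 3)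
    · exact (((continuous_pow 3).mul (by fun_prop)).mul hPhicont).aestronglyMeasurable
    · filter_upwards [ae_restrict_mem measurableSet_Ioi] with t ht
      have ht' : (0:ℝ) < t := ht
      rw [Real.norm_eq_abs, abs_mul, abs_mul,
        abs_of_nonneg (by positivity : (0:ℝ) ≤ t ^ 3), abs_of_nonneg (Real.exp_nonneg _)]
      calc t ^ 3 * Real.exp (-t ^ 2 / 2) * |Phi (c * t)|
          ≤ t ^ 3 * Real.exp (-t ^ 2 / 2) * 1 :=
            mul_le_mul_of_nonneg_left (abs_Phi_le_one _) (by positivity)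
        _ = t ^ 3 * Real.exp (-t ^ 2 / 2) := by ring
  have hinth : IntegrableOn (fun t : ℝ => (c / Real.sqrt (2 * π))
      * (t ^ 2 * Real.exp (-b * t ^ 2) + 2 * Real.exp (-b * t ^ 2))) (Set.Ioi 0) := by
    apply Integrable.const_mul
    exact (integrableOn_pow_gauss hb 2).add
      (((integrable_exp_neg_mul_sq hb).integrableOn).const_mul 2)
  have hintf' : IntegrableOn f' (Set.Ioi 0) := hintg.sub hinth
  -- FTC
  have key := integral_Ioi_of_hasDerivAt_of_tendsto
    (hderiv 0).continuousAt.continuousWithinAt (fun x _ => hderiv x) hintf' htendF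
  have hF0 : F 0 = -1 := by
    rw [hF]
    simp [Phi_zero]
  rw [hF0] at key
  -- split the integral
  have hsplit : (∫ t in Set.Ioi (0:ℝ), f' t)
      = (∫ t in Set.Ioi (0:ℝ), t ^ 3 * Real.exp (-t ^ 2 / 2) * Phi (c * t))
        - ∫ t in Set.Ioi (0:ℝ), (c / Real.sqrt (2 * π))
            * (t ^ 2 * Real.exp (-b * t ^ 2) + 2 * Real.exp (-b * t ^ 2)) := by
    rw [hf', integral_sub hintg hinth]
  rw [hsplit] at key
  -- compute the Gaussian part
  have hgauss : (∫ t in Set.Ioi (0:ℝ), (c / Real.sqrt (2 * π))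
      * (t ^ 2 * Real.exp (-b * t ^ 2) + 2 * Real.exp (-b * t ^ 2)))
      = (3 * ρ - ρ ^ 3) / 2 := by
    rw [integral_const_mul, integral_add (integrableOn_pow_gauss hb 2)
      (((integrable_exp_neg_mul_sq hb).integrableOn).const_mul 2),
      integral_const_mul, integral_sq_gauss hb, integral_gaussian_Ioi b]
    have hπb : π / b = 2 * π * r ^ 2 := by
      rw [hbdef, ← hr2]
      field_simp
    have hsq : Real.sqrt (π / b) = Real.sqrt (2 * π) * r := by
      rw [hπb, Real.sqrt_mul (by positivity), Real.sqrt_sq hr.le]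
    rw [hsq, hcdef, hbdef]
    have hs2π : (0:ℝ) < Real.sqrt (2 * π) := by positivity
    field_simp
    nlinarith [hr2, hr, hs2π, sq_nonneg r]
  rw [hgauss] at key
  linarith
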